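/- For n ≥ 1 even, the derivative of the Zagier polynomial satisfies d/dx B*_n(x) = sum_{j=1}^{n/2} (2j-1) B*_{2j-1}(x). -/

import Mathlib

open Finset Polynomial

lemma keycast (i m : ℕ) :
    ((2*i+m+1 : ℕ):ℝ) * ((2*i+m).choose (2*m) : ℝ)
      = (2*(i:ℝ)+1-m) * ((2*i+m+1).choose (2*m) : ℝ) := by
  push_cast
  rcases le_or_gt m (2*i+1) with h | h
  · have hnat := Nat.choose_mul_succ_eq (2*i+m) (2*m)
    have h2 : 2*i+m+1 - 2*m = 2*i+1-m := by omega
    rw [h2] at hnat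
    have hR : ((((2*i+m).choose (2*m)) * (2*i+m+1) : ℕ) : ℝ) = (((2*i+m+1).choose (2*m)) * (2*i+1-m) : ℕ) := by exact_mod_cast hnat
    push_cast [Nat.cast_sub h] at hR
    linarith
  · have h1 : (2*i+m).choose (2*m) = 0 := Nat.choose_eq_zero_of_lt (by omega)
    have h2 : (2*i+m+1).choose (2*m) = 0 := Nat.choose_eq_zero_of_lt (by omega)
    rw [h1, h2]; simp

lemma perterm (i m : ℕ) :
    (2*(i:ℝ)+1) * ((2*i+1+m).choose (2*m) : ℝ) / (2*(i:ℝ)+1+m)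
      = (1/2) * ((2*(i+1)+m).choose (2*m+1) : ℝ) - (1/2) * ((2*i+m).choose (2*m+1) : ℝ) := by
  have hd : (2*(i:ℝ)+1+m) ≠ 0 := by positivity
  rw [div_eq_iff hd]
  have e1 : 2*(i+1)+m = (2*i+m+1)+1 := by ring
  have e2 : 2*i+1+m = 2*i+m+1 := by ring
  rw [e1, e2]
  have p1 : ((2*i+m+1)+1).choose (2*m+1) = (2*i+m+1).choose (2*m) + (2*i+m+1).choose (2*m+1) :=
    Nat.choose_succ_succ' (2*i+m+1) (2*m)
  have p2 : (2*i+m+1).choose (2*m+1) = (2*i+m).choose (2*m) + (2*i+m).choose (2*m+1) :=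
    Nat.choose_succ_succ' (2*i+m) (2*m)
  have hk := keycast i m
  push_cast at hk
  have p1' : (((2*i+m+1)+1).choose (2*m+1) : ℝ) = ((2*i+m+1).choose (2*m) : ℝ) + ((2*i+m+1).choose (2*m+1) : ℝ) := by exact_mod_cast p1
  have p2' : ((2*i+m+1).choose (2*m+1) : ℝ) = ((2*i+m).choose (2*m) : ℝ) + ((2*i+m).choose (2*m+1) : ℝ) := by exact_mod_cast p2
  linear_combination (-(2*(i:ℝ)+1+↑m)/2) * p1' + (-(2*(i:ℝ)+1+↑m)/2) * p2' + (-1/2) * hk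

lemma coeffsum (n m : ℕ) (hn : 1 ≤ n) (hne : Even n) :
    ∑ j ∈ Icc 1 (n/2), (2*(j:ℝ)-1) * ((2*j-1+m).choose (2*m) : ℝ) / (((2*j-1 : ℕ) : ℝ) + m)
      = ((n+m+1).choose (2*m+2) : ℝ) * ((m:ℝ)+1) / ((n:ℝ)+m+1) := by
  rw [← Finset.Ico_add_one_right_eq_Icc, Finset.sum_Ico_eq_sum_range]
  have hstep : ∀ i ∈ range (n/2+1-1),
      (2*((1+i : ℕ):ℝ)-1) * ((2*(1+i)-1+m).choose (2*m) : ℝ) / (((2*(1+i)-1 : ℕ) : ℝ) + m)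
        = (fun i => (1/2) * ((2*i+m).choose (2*m+1) : ℝ)) (i+1)
          - (fun i => (1/2) * ((2*i+m).choose (2*m+1) : ℝ)) i := by
    intro i _
    have h1 : 2*(1+i)-1 = 2*i+1 := by omega
    rw [h1]
    have := perterm i m
    push_cast at this ⊢
    rw [show (2:ℝ)*(1+(i:ℝ))-1 = 2*i+1 by ring]
    rw [show (2:ℝ)*(i:ℝ)+1+m = 2*i+1+m by ring] at this
    simpa [mul_add] using this
  rw [Finset.sum_congr rfl hstep, Finset.sum_range_sub
    (fun i => (1/2) * ((2*i+m).choose (2*m+1) : ℝ))]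
  have h0 : (m.choose (2*m+1) : ℝ) = 0 := by
    rw [Nat.choose_eq_zero_of_lt (by omega)]; simp
  have hN : 2*(n/2)+m = n+m := by
    have := Nat.div_two_mul_two_of_even hne; omega
  simp only [Nat.mul_zero, Nat.zero_add, hN, h0, mul_zero, sub_zero]
  have hkey := Nat.add_one_mul_choose_eq (n+m) (2*m+1)
  have hkey' : ((n+m+1) * (n+m).choose (2*m+1) : ℝ) = ((n+m+1).choose (2*m+2) : ℝ) * (2*m+2) := by
    exact_mod_cast hkey
  have hd : ((n:ℝ)+m+1) ≠ 0 := by positivity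
  push_cast at hkey'
  rw [Nat.add_sub_cancel, hN]
  field_simp
  linarith

/-- The Zagier polynomials, evaluated at a real number. -/
noncomputable def zagierBstarPoly (n : ℕ) (x : ℝ) : ℝ :=
  ∑ r ∈ Finset.range (n + 1),
    ((n + r).choose (2 * r) : ℝ) * (Polynomial.aeval x (Polynomial.bernoulli r)) / (n + r)

theorem zagierBstarPoly_deriv_even (n : ℕ) (hn : 1 ≤ n) (hne : Even n) (x : ℝ) :
    deriv (zagierBstarPoly n) x
      = ∑ j ∈ Finset.Icc 1 (n / 2), (2 * (j : ℝ) - 1) * zagierBstarPoly (2 * j - 1) x := by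
  have hderiv : deriv (zagierBstarPoly n) x
      = ∑ r ∈ Finset.range (n + 1),
          ((n + r).choose (2 * r) : ℝ) * ((r:ℝ) * Polynomial.aeval x (Polynomial.bernoulli (r-1))) / ((n:ℝ) + r) := by
    have h : HasDerivAt (zagierBstarPoly n)
        (∑ r ∈ Finset.range (n + 1),
          ((n + r).choose (2 * r) : ℝ) * ((r:ℝ) * Polynomial.aeval x (Polynomial.bernoulli (r-1))) / ((n:ℝ) + r)) x := by
      unfold zagierBstarPoly
      apply HasDerivAt.fun_sum
      intro r _
      have h1 := (Polynomial.bernoulli r).hasDerivAt_aeval (𝕜 := ℝ) x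
      rw [Polynomial.derivative_bernoulli] at h1
      have h2 : (Polynomial.aeval x ((r : ℚ[X]) * Polynomial.bernoulli (r-1)) : ℝ)
          = (r:ℝ) * Polynomial.aeval x (Polynomial.bernoulli (r-1)) := by simp
      rw [h2] at h1
      exact (h1.const_mul (((n + r).choose (2 * r) : ℝ))).div_const ((n:ℝ) + r)
    exact h.deriv
  rw [hderiv, Finset.sum_range_succ']
  simp only [Nat.cast_zero, zero_mul, mul_zero, zero_div, add_zero]
  -- now LHS : ∑ i ∈ range n, ((n+(i+1)).choose (2*(i+1)):ℝ) * (↑(i+1) * b i) / (↑n + ↑(i+1))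
  -- RHS transformation
  have hrhs : ∀ j ∈ Icc 1 (n/2),
      (2 * (j : ℝ) - 1) * zagierBstarPoly (2 * j - 1) x
        = ∑ r ∈ range n, (2*(j:ℝ)-1) * (((2*j-1+r).choose (2*r) : ℝ)
            * Polynomial.aeval x (Polynomial.bernoulli r) / (((2*j-1 : ℕ) : ℝ) + r)) := by
    intro j hj
    rw [Finset.mem_Icc] at hj
    unfold zagierBstarPoly
    rw [Finset.mul_sum]
    apply Finset.sum_subset
    · intro r hr
      rw [Finset.mem_range] at hr ⊢
      have h2j : 2 * j ≤ n := by
        rcases hne with ⟨k, hk⟩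
        omega
      omega
    · intro r _ hr
      rw [Finset.mem_range, not_lt] at hr
      have : (2*j-1+r).choose (2*r) = 0 := Nat.choose_eq_zero_of_lt (by omega)
      rw [this]
      simp
  rw [Finset.sum_congr rfl hrhs, Finset.sum_comm]
  apply Finset.sum_congr rfl
  intro r _
  have key := coeffsum n r hn hne
  have hfac : ∀ j ∈ Icc 1 (n/2),
      (2*(j:ℝ)-1) * (((2*j-1+r).choose (2*r) : ℝ)
          * Polynomial.aeval x (Polynomial.bernoulli r) / (((2*j-1 : ℕ) : ℝ) + r))
        = ((2*(j:ℝ)-1) * ((2*j-1+r).choose (2*r) : ℝ) / (((2*j-1 : ℕ) : ℝ) + r))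
            * Polynomial.aeval x (Polynomial.bernoulli r) := by
    intro j _
    ring
  rw [Finset.sum_congr rfl hfac, ← Finset.sum_mul, key]
  push_cast
  ring
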